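/- (Lemma `tecnico`, Appendix) Fix ℓ ∈ ℤ^ν \ {0} and let ς : R_M → ℝ be Lipschitz with constant c₀, where 0 ≤ c₀ < |ℓ| (i.e. |ς(ω₁) − ς(ω₂)| ≤ c₀|ω₁ − ω₂| for all ω₁, ω₂ ∈ R_M). Define f(ω) := ω·ℓ + ς(ω). Then for every δ ≥ 0, the Lebesgue measure of the set A := {ω ∈ R_M : |f(ω)| ≤ δ} satisfies |A| ≤ (2δ/(|ℓ| − c₀))·(4M)^{ν−1}. -/

import Mathlib

noncomputable section

open MeasureTheory

/-- The closed annulus `R_M = {ω ∈ ℝ^ν : M ≤ |ω| ≤ 2M}`. -/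
def RM (ν : ℕ) (M : ℝ) : Set (EuclideanSpace ℝ (Fin ν)) :=
  {ω | M ≤ ‖ω‖ ∧ ‖ω‖ ≤ 2 * M}

/-- Euclidean norm of an integer vector `ℓ ∈ ℤ^ν`. -/
def znorm {ν : ℕ} (ℓ : Fin ν → ℤ) : ℝ := Real.sqrt (∑ i, ((ℓ i : ℝ)) ^ 2)

/-- The inner product `ω·ℓ`. -/
def dotZ {ν : ℕ} (ω : EuclideanSpace ℝ (Fin ν)) (ℓ : Fin ν → ℤ) : ℝ :=
  ∑ i, ω i * (ℓ i : ℝ)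

lemma abs_coord_le_norm {m : ℕ} (x : EuclideanSpace ℝ (Fin m)) (i : Fin m) : |x i| ≤ ‖x‖ := by
  have h := EuclideanSpace.norm_eq x
  have h1 : ‖x i‖ ^ 2 ≤ ∑ j, ‖x j‖ ^ 2 :=
    Finset.single_le_sum (f := fun j => ‖x j‖ ^ 2) (fun j _ => sq_nonneg _) (Finset.mem_univ i)
  calc |x i| = Real.sqrt (‖x i‖ ^ 2) := by
        rw [Real.sqrt_sq (norm_nonneg _)]; exact (Real.norm_eq_abs _ ▸ rfl)
    _ ≤ Real.sqrt (∑ j, ‖x j‖ ^ 2) := Real.sqrt_le_sqrt h1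
    _ = ‖x‖ := h.symm

lemma insertNth_sub_insertNth {n : ℕ} (t t' : ℝ) (y : Fin n → ℝ) :
    (WithLp.toLp 2 (Fin.insertNth 0 t y) - WithLp.toLp 2 (Fin.insertNth 0 t' y) : EuclideanSpace ℝ (Fin (n + 1))) =
      EuclideanSpace.single 0 (t - t') := by
  ext i
  rw [PiLp.sub_apply]
  induction i using Fin.cases with
  | zero => simp [EuclideanSpace.single_apply]
  | succ j => simp [EuclideanSpace.single_apply, Fin.succ_ne_zero]

lemma piFinSuccAbove_symm_apply' {n : ℕ} (p : ℝ × (Fin n → ℝ)) :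
    ((MeasurableEquiv.piFinSuccAbove (fun _ => ℝ) 0).symm p : Fin (n + 1) → ℝ) =
      Fin.insertNth 0 p.1 p.2 := by
  simp only [MeasurableEquiv.piFinSuccAbove, MeasurableEquiv.symm_mk, MeasurableEquiv.coe_mk,
    Equiv.symm_symm]
  rfl

/-- **Lemma (tecnico).** Measure estimate for sublevel sets of `f(ω) = ω·ℓ + ς(ω)`. -/
theorem lemma_tecnico (ν : ℕ) (hν : 1 ≤ ν) (M : ℝ) (hM : 0 < M)
    (ℓ : Fin ν → ℤ) (hℓ : ℓ ≠ 0)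
    (c₀ : ℝ) (hc₀ : 0 ≤ c₀) (hc₀ℓ : c₀ < znorm ℓ)
    (ς : EuclideanSpace ℝ (Fin ν) → ℝ)
    (hς : ∀ ω₁ ∈ RM ν M, ∀ ω₂ ∈ RM ν M, |ς ω₁ - ς ω₂| ≤ c₀ * ‖ω₁ - ω₂‖)
    (δ : ℝ) (hδ : 0 ≤ δ) :
    volume {ω ∈ RM ν M | |dotZ ω ℓ + ς ω| ≤ δ} ≤
      ENNReal.ofReal (2 * δ / (znorm ℓ - c₀) * (4 * M) ^ (ν - 1)) := by
  obtain ⟨n, rfl⟩ : ∃ n, ν = n + 1 := ⟨ν - 1, (Nat.succ_pred_eq_of_pos hν).symm⟩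
  set nrm := znorm ℓ with hnrmdef
  have hnrm : 0 < nrm := lt_of_le_of_lt hc₀ hc₀ℓ
  set L : ℝ := 2 * δ / (nrm - c₀) with hLdef
  have hsub : 0 < nrm - c₀ := by linarith
  have hL : 0 ≤ L := div_nonneg (by linarith) hsub.le
  -- the vector ℓ' and unit vector e
  set ℓ' : EuclideanSpace ℝ (Fin (n + 1)) := WithLp.toLp 2 (fun i => (ℓ i : ℝ)) with hℓ'def
  have hℓ'norm : ‖ℓ'‖ = nrm := by
    rw [EuclideanSpace.norm_eq, hnrmdef, znorm]
    congr 1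
    exact Finset.sum_congr rfl fun i _ => by rw [Real.norm_eq_abs, sq_abs]
  set e : EuclideanSpace ℝ (Fin (n + 1)) := nrm⁻¹ • ℓ' with hedef
  have he : ‖e‖ = 1 := by
    rw [hedef, norm_smul, hℓ'norm, Real.norm_eq_abs, abs_inv, abs_of_pos hnrm,
      inv_mul_cancel₀ hnrm.ne']
  -- orthonormal basis with b 0 = e
  have hon : Orthonormal ℝ (({0} : Set (Fin (n + 1))).restrict (fun _ => e)) := by
    constructor
    · intro i; exact he
    · intro i j hij
      exact absurd (Subtype.ext (i.2.trans j.2.symm)) hij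
  obtain ⟨b, hb⟩ := hon.exists_orthonormalBasis_extension_of_card_eq
    (by simp [finrank_euclideanSpace]) 
  have hb0 : b 0 = e := hb 0 rfl
  -- inner product identity
  have hinner : ∀ ω : EuclideanSpace ℝ (Fin (n + 1)), dotZ ω ℓ = inner ℝ ℓ' ω := by
    intro ω
    rw [PiLp.inner_apply]
    simp [dotZ, hℓ'def, RCLike.inner_apply, mul_comm]
  have hdot : ∀ ω : EuclideanSpace ℝ (Fin (n + 1)), dotZ ω ℓ = nrm * b.repr ω 0 := by
    intro ω
    rw [b.repr_apply_apply, hb0, hedef, real_inner_smul_left, ← hinner]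
    field_simp
  -- the set A
  set A : Set (EuclideanSpace ℝ (Fin (n + 1))) := {ω ∈ RM (n + 1) M | |dotZ ω ℓ + ς ω| ≤ δ} with hAdef
  -- A is closed
  have hRMclosed : IsClosed (RM (n + 1) M) := by
    have : RM (n + 1) M = (fun ω : EuclideanSpace ℝ (Fin (n + 1)) => ‖ω‖) ⁻¹' Set.Icc M (2 * M) := by
      ext ω; simp [RM, Set.mem_Icc]
    rw [this]
    exact IsClosed.preimage continuous_norm isClosed_Icc
  have hdotcont : Continuous fun ω : EuclideanSpace ℝ (Fin (n + 1)) => dotZ ω ℓ := by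
    have : Continuous fun ω : EuclideanSpace ℝ (Fin (n + 1)) => (inner ℝ ℓ' ω : ℝ) := Continuous.inner continuous_const continuous_id
    convert this using 1
    exact funext fun ω => hinner ω
  have hςcont : ContinuousOn ς (RM (n + 1) M) := by
    have : LipschitzOnWith (Real.toNNReal c₀) ς (RM (n + 1) M) := by
      rw [lipschitzOnWith_iff_dist_le_mul]
      intro x hx y hy
      rw [Real.dist_eq, dist_eq_norm]
      calc |ς x - ς y| ≤ c₀ * ‖x - y‖ := hς x hx y hy
        _ = (Real.toNNReal c₀ : ℝ) * ‖x - y‖ := by rw [Real.coe_toNNReal c₀ hc₀]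
    exact this.continuousOn
  have hAclosed : IsClosed A := by
    have hA' : A = RM (n + 1) M ∩ (fun ω => |dotZ ω ℓ + ς ω|) ⁻¹' Set.Iic δ := by
      ext ω; simp [hAdef, Set.mem_setOf_eq, And.comm]
    rw [hA']
    exact ContinuousOn.preimage_isClosed_of_isClosed
      (((hdotcont.continuousOn).add hςcont).abs) hRMclosed isClosed_Iic
  have hAm : MeasurableSet A := hAclosed.measurableSet
  -- the map Ψ
  set Ψ : ℝ × (Fin n → ℝ) → EuclideanSpace ℝ (Fin (n + 1)) := fun p =>
    b.repr.symm ((MeasurableEquiv.toLp 2 (Fin (n + 1) → ℝ))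
      ((MeasurableEquiv.piFinSuccAbove (fun _ => ℝ) 0).symm p)) with hΨdef
  have hΨmp : MeasurePreserving Ψ volume volume := by
    exact (b.measurePreserving_repr_symm).comp
      (((EuclideanSpace.volume_preserving_symm_measurableEquiv_toLp (Fin (n + 1))).symm).comp
        ((volume_preserving_piFinSuccAbove (fun _ : Fin (n + 1) => ℝ) 0).symm))
  -- coordinates of Ψ p
  have hrepr : ∀ p : ℝ × (Fin n → ℝ),
      b.repr (Ψ p) = WithLp.toLp 2 (Fin.insertNth 0 p.1 p.2) := by
    intro p
    rw [hΨdef]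
    simp only [LinearIsometryEquiv.apply_symm_apply]
    rw [← piFinSuccAbove_symm_apply' p]
    rfl
  set D : Set (ℝ × (Fin n → ℝ)) := Ψ ⁻¹' A with hDdef
  have hDm : MeasurableSet D := hΨmp.measurable hAm
  have hvol : volume A = volume D := (hΨmp.measure_preimage hAm.nullMeasurableSet).symm
  -- slice bound
  have hslice_key : ∀ (y : Fin n → ℝ) (t t' : ℝ), (t, y) ∈ D → (t', y) ∈ D → |t - t'| ≤ L := by
    intro y t t' h1 h2
    set ω := Ψ (t, y) with hω
    set ω' := Ψ (t', y) with hω'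
    have hωA : ω ∈ A := h1
    have hω'A : ω' ∈ A := h2
    have hr1 : b.repr ω = WithLp.toLp 2 (Fin.insertNth 0 t y) := hrepr (t, y)
    have hr2 : b.repr ω' = WithLp.toLp 2 (Fin.insertNth 0 t' y) := hrepr (t', y)
    have hdiff : ‖ω - ω'‖ = |t - t'| := by
      rw [← b.repr.norm_map (ω - ω'), map_sub, hr1, hr2, insertNth_sub_insertNth,
        EuclideanSpace.norm_single, Real.norm_eq_abs]
    have hcoord0 : ∀ (s : ℝ) (z : EuclideanSpace ℝ (Fin (n + 1))) (v : Fin n → ℝ),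
        z = WithLp.toLp 2 (Fin.insertNth 0 s v) → z 0 = s := by
      intro s z v hz
      have := congrArg (fun x : EuclideanSpace ℝ (Fin (n + 1)) => x 0) hz
      simpa using this
    have hd1 : dotZ ω ℓ = nrm * t := by
      rw [hdot ω, hcoord0 t (b.repr ω) y hr1]
    have hd2 : dotZ ω' ℓ = nrm * t' := by
      rw [hdot ω', hcoord0 t' (b.repr ω') y hr2]
    have hςb : |ς ω - ς ω'| ≤ c₀ * |t - t'| := by
      have := hς ω hωA.1 ω' hω'A.1
      rwa [hdiff] at this
    have hfb : |(dotZ ω ℓ + ς ω) - (dotZ ω' ℓ + ς ω')| ≤ 2 * δ := by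
      calc |(dotZ ω ℓ + ς ω) - (dotZ ω' ℓ + ς ω')|
          ≤ |dotZ ω ℓ + ς ω| + |dotZ ω' ℓ + ς ω'| := abs_sub _ _
        _ ≤ δ + δ := add_le_add hωA.2 hω'A.2
        _ = 2 * δ := by ring
    have key : nrm * |t - t'| - c₀ * |t - t'| ≤ 2 * δ := by
      have e1 : nrm * (t - t') = ((dotZ ω ℓ + ς ω) - (dotZ ω' ℓ + ς ω')) - (ς ω - ς ω') := by
        rw [hd1, hd2]; ring
      have e2 : nrm * |t - t'| = |nrm * (t - t')| := by
        rw [abs_mul, abs_of_pos hnrm]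
      rw [e2, e1]
      calc |((dotZ ω ℓ + ς ω) - (dotZ ω' ℓ + ς ω')) - (ς ω - ς ω')| - c₀ * |t - t'|
          ≤ (|(dotZ ω ℓ + ς ω) - (dotZ ω' ℓ + ς ω')| + |ς ω - ς ω'|) - c₀ * |t - t'| := by
            have := abs_sub ((dotZ ω ℓ + ς ω) - (dotZ ω' ℓ + ς ω')) (ς ω - ς ω')
            linarith
        _ ≤ 2 * δ := by linarith
    rw [hLdef, le_div_iff₀ hsub]
    linarith
  -- coordinate bound
  have hcoord : ∀ (y : Fin n → ℝ) (t : ℝ), (t, y) ∈ D → ∀ j, y j ∈ Set.Icc (-(2 * M)) (2 * M) := by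
    intro y t h j
    set ω := Ψ (t, y)
    have hωA : ω ∈ A := h
    have hr1 : b.repr ω = WithLp.toLp 2 (Fin.insertNth 0 t y) := hrepr (t, y)
    have hyj : (b.repr ω) (Fin.succ j) = y j := by
      have := congrArg (fun x : EuclideanSpace ℝ (Fin (n + 1)) => x (Fin.succ j)) hr1
      simpa using this
    have : |y j| ≤ ‖ω‖ := by
      rw [← hyj, ← b.repr.norm_map ω]
      exact abs_coord_le_norm (b.repr ω) (Fin.succ j)
    have h2M : |y j| ≤ 2 * M := this.trans hωA.1.2
    exact abs_le.mp h2M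
  -- the cube
  set Q : Set (Fin n → ℝ) := Set.univ.pi (fun _ => Set.Icc (-(2 * M)) (2 * M)) with hQdef
  have hQm : MeasurableSet Q := MeasurableSet.univ_pi fun _ => measurableSet_Icc
  have hQvol : volume Q = (ENNReal.ofReal (4 * M)) ^ n := by
    rw [hQdef, volume_pi_pi]
    have : (2 * M - -(2 * M)) = 4 * M := by ring
    simp only [Real.volume_Icc, this, Finset.prod_const, Finset.card_univ, Fintype.card_fin]
  -- main computation
  rw [hvol, show (volume : Measure (ℝ × (Fin n → ℝ))) = (volume : Measure ℝ).prod volume from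
    Measure.volume_eq_prod ℝ (Fin n → ℝ), Measure.prod_apply_symm hDm]
  have hbound : ∀ y : Fin n → ℝ,
      volume ((fun t => (t, y)) ⁻¹' D) ≤ Q.indicator (fun _ => ENNReal.ofReal L) y := by
    intro y
    by_cases hy : y ∈ Q
    · rw [Set.indicator_of_mem hy]
      refine (Real.volume_le_diam _).trans ?_
      refine EMetric.diam_le ?_
      intro t ht t' ht'
      rw [edist_dist, Real.dist_eq]
      exact ENNReal.ofReal_le_ofReal (hslice_key y t t' ht ht')
    · rw [Set.indicator_of_notMem hy]
      have : (fun t => (t, y)) ⁻¹' D = ∅ := by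
        ext t
        simp only [Set.mem_preimage, Set.mem_empty_iff_false, iff_false]
        intro hmem
        exact hy (Set.mem_univ_pi.mpr fun j => hcoord y t hmem j)
      rw [this, measure_empty]
  calc ∫⁻ y, volume ((fun t => (t, y)) ⁻¹' D) ∂volume
      ≤ ∫⁻ y, Q.indicator (fun _ => ENNReal.ofReal L) y ∂volume := lintegral_mono hbound
    _ = ENNReal.ofReal L * volume Q := by
        rw [lintegral_indicator hQm _, setLIntegral_const]
    _ = ENNReal.ofReal (L * (4 * M) ^ n) := by
        rw [hQvol, ← ENNReal.ofReal_pow (by positivity), ← ENNReal.ofReal_mul hL]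
    _ = ENNReal.ofReal (2 * δ / (znorm ℓ - c₀) * (4 * M) ^ (n + 1 - 1)) := by
        norm_num [hLdef, hnrmdef]
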